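/- Let λ ∈ ∂𝔻, let φ ∈ H^∞(𝔻), and let T = R_λ φ(B) be the corresponding extended λ-eigenoperator of B on H²(𝔻). Set Φ_n(z) = φ(z)·φ(λz)·⋯·φ(λ^{n−1}z). If there exist c > 0 and n₀ ∈ ℕ such that inf_{z∈𝔻} |Φ_n(z)| ≥ c for all n ≥ n₀, then Tⁿ is invertible with ‖T^{−n}‖ ≤ 1/c for all n ≥ n₀, and T is not hypercyclic. -/

import Mathlib

open Complex Metric Filter Topology ComplexConjugate

noncomputable section

/-- The Hardy space `H²(𝔻)`, modeled via Taylor coefficients as the sequence space `ℓ²`: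
an analytic function `f(z) = Σ aₙ zⁿ` on the unit disk with `Σ |aₙ|² < ∞` is identified
with its coefficient sequence. -/
abbrev H2 := lp (fun _ : ℕ => ℂ) 2

/-- The analytic function on the unit disk represented by an element of `H²`. -/
def H2.toFun (f : H2) (z : ℂ) : ℂ := ∑' n : ℕ, f n * z ^ n

/-- `B` is the backward shift `(Bf)(z) = (f(z) - f(0))/z`, i.e. on Taylor coefficients
`(Bf)ₙ = f_{n+1}`. -/
def IsBackwardShift (B : H2 →L[ℂ] H2) : Prop :=
  ∀ (f : H2) (n : ℕ), B f n = f (n + 1)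

/-- `R` is the dilation operator `(R_λ f)(z) = f(λ z)`, i.e. on Taylor coefficients
`(R_λ f)ₙ = λⁿ fₙ`. -/
def IsDilation (lam : ℂ) (R : H2 →L[ℂ] H2) : Prop :=
  ∀ (f : H2) (n : ℕ), R f n = lam ^ n * f n

/-- `φ ∈ H^∞(𝔻)`: a bounded analytic function on the open unit disk. -/
def InHinf (φ : ℂ → ℂ) : Prop :=
  DifferentiableOn ℂ φ (ball (0:ℂ) 1) ∧ ∃ M : ℝ, ∀ z ∈ ball (0:ℂ) 1, ‖φ z‖ ≤ M

/-- `Φ = φ(B)`, the coanalytic Toeplitz operator `M_{φ̄}⋆` with symbol `φ`: there is a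
Taylor coefficient sequence `c` for `φ` on the disk such that
`(Φ f)ₙ = Σ_k c_k f_{n+k}` (equivalently `Φ = Σ_k c_k B^k`). -/
def IsCoToeplitz (φ : ℂ → ℂ) (Φ : H2 →L[ℂ] H2) : Prop :=
  ∃ c : ℕ → ℂ,
    (∀ z ∈ ball (0:ℂ) 1, HasSum (fun k => c k * z ^ k) (φ z)) ∧
    (∀ (f : H2) (n : ℕ), HasSum (fun k => c k * f (n + k)) (Φ f n))

/-- An operator `T` is hypercyclic if some vector has dense orbit `{Tⁿ x : n ∈ ℕ}`. -/
def Hypercyclic (T : H2 →L[ℂ] H2) : Prop :=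
  ∃ x : H2, Dense (Set.range fun n : ℕ => (T ^ n) x)

/-- An operator `T` is supercyclic if for some vector `x` the set of scalar multiples
`{μ Tⁿ x : μ ∈ ℂ, n ∈ ℕ}` is dense. -/
def Supercyclic (T : H2 →L[ℂ] H2) : Prop :=
  ∃ x : H2, Dense {y : H2 | ∃ (μ : ℂ) (n : ℕ), y = μ • (T ^ n) x}

/-- `φ̄(z) = conj (φ (conj z))`. -/
def conjSymb (φ : ℂ → ℂ) (z : ℂ) : ℂ := conj (φ (conj z))

/-- `λ` is an irrational rotation: `|λ| = 1` and `λ` is not a root of unity. -/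
def IsIrrationalRotation (lam : ℂ) : Prop :=
  ‖lam‖ = 1 ∧ ∀ n : ℕ, 0 < n → lam ^ n ≠ 1

/-- `Ψ_n(z) = φ̄(z)·φ̄(αz)⋯φ̄(α^{n-1}z)` where `α = conj λ`. -/
def psiProd (φ : ℂ → ℂ) (lam : ℂ) (n : ℕ) (z : ℂ) : ℂ :=
  ∏ j ∈ Finset.range n, conjSymb φ ((conj lam) ^ j * z)

/-- `Ω_n(z) = φ̄(ωz)·φ̄(ω²z)⋯φ̄(ωⁿz)` where `ω = 1/conj λ`. -/
def omegaProd (φ : ℂ → ℂ) (lam : ℂ) (n : ℕ) (z : ℂ) : ℂ :=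
  ∏ j ∈ Finset.range n, conjSymb φ (((conj lam)⁻¹) ^ (j + 1) * z)

lemma memℓp_geom {a : ℂ} (ha : ‖a‖ < 1) : Memℓp (fun n : ℕ => (conj a) ^ n) 2 := by
  apply memℓp_gen
  have hs : Summable fun n : ℕ => (‖a‖ ^ 2) ^ n :=
    summable_geometric_of_lt_one (by positivity) (by nlinarith [norm_nonneg a])
  refine hs.congr fun n => ?_
  rw [norm_pow]
  simp only [RCLike.norm_conj]
  rw [ENNReal.toReal_ofNat, Real.rpow_two]
  ring

/-- The reproducing kernel `k_a(z) = 1/(1 - conj(a) z) = Σ (conj a)ⁿ zⁿ` of `H²(𝔻)`,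
as an element of `H²` (junk value `0` if `a` is outside the unit disk). -/
def kernelVec (a : ℂ) : H2 :=
  if ha : ‖a‖ < 1 then ⟨fun n => (conj a) ^ n, memℓp_geom ha⟩ else 0

/-- `T` satisfies the Hypercyclicity Criterion for the sequence `(n_k)`. -/
def SatisfiesHCCriterion (T : H2 →L[ℂ] H2) (nk : ℕ → ℕ) : Prop :=
  ∃ (X₀ Y₀ : Set H2) (S : ℕ → H2 → H2),
    Dense X₀ ∧ Dense Y₀ ∧
    (∀ x ∈ X₀, Tendsto (fun k => (T ^ nk k) x) atTop (𝓝 0)) ∧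
    (∀ y ∈ Y₀, Tendsto (fun k => S k y) atTop (𝓝 0)) ∧
    (∀ y ∈ Y₀, Tendsto (fun k => (T ^ nk k) (S k y)) atTop (𝓝 y))

/-- A family `F` of functions is normal at `z₀`: on some open neighborhood of `z₀`,
every (sub)sequence of the family has a locally uniformly convergent subsequence. -/
def NormalAt (F : ℕ → ℂ → ℂ) (z₀ : ℂ) : Prop :=
  ∃ U : Set ℂ, IsOpen U ∧ z₀ ∈ U ∧
    ∀ g : ℕ → ℕ, StrictMono g →
      ∃ (h : ℕ → ℕ) (f : ℂ → ℂ), StrictMono h ∧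
        TendstoLocallyUniformlyOn (fun j => F (g (h j))) f atTop U

/-- The family `{F n : n ≥ 1}` is uniformly bounded on compact subsets of the unit disk. -/
def UnifBddOnCompacts (F : ℕ → ℂ → ℂ) : Prop :=
  ∀ K : Set ℂ, K ⊆ ball (0:ℂ) 1 → IsCompact K →
    ∃ M : ℝ, ∀ n : ℕ, 1 ≤ n → ∀ z ∈ K, ‖F n z‖ ≤ M


namespace Stmt6Aux
open Finset

lemma summable_sq (f : H2) : Summable fun n => ‖f n‖ ^ 2 := by
  have h := (memℓp_gen_iff (p := 2) (by norm_num) (f := (f : ∀ _ : ℕ, ℂ))).mp (lp.memℓp f)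
  refine h.congr fun n => ?_
  rw [ENNReal.toReal_ofNat, Real.rpow_two]

lemma memℓp_of_sq {g : ℕ → ℂ} (h : Summable fun n => ‖g n‖ ^ 2) : Memℓp g 2 := by
  apply memℓp_gen
  refine h.congr fun n => ?_
  rw [ENNReal.toReal_ofNat, Real.rpow_two]

lemma norm_sq_eq (f : H2) : ‖f‖ ^ 2 = ∑' n, ‖f n‖ ^ 2 := by
  have h := lp.norm_rpow_eq_tsum (p := 2) (by norm_num) f
  simp only [ENNReal.toReal_ofNat, Real.rpow_two] at h
  exact h

lemma h2_ext {f g : H2} (h : ∀ n, (f : ∀ _ : ℕ, ℂ) n = g n) : f = g := by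
  apply Subtype.ext; funext n; exact h n

lemma h2_coe_mk {g : ℕ → ℂ} (hg : Memℓp g 2) (n : ℕ) : ((⟨g, hg⟩ : H2) : ∀ _ : ℕ, ℂ) n = g n := rfl

lemma norm_le_of_sq_le {f : H2} {b : ℝ} (hb : 0 ≤ b) (h : ‖f‖ ^ 2 ≤ b ^ 2) : ‖f‖ ≤ b := by
  nlinarith [norm_nonneg f]


open Finset

lemma bound_of_summable {g : ℕ → ℂ} (h : Summable g) : ∃ C : ℝ, ∀ n, ‖g n‖ ≤ C := by
  have h2 : Tendsto (fun n => ‖g n‖) atTop (𝓝 0) := by simpa using h.tendsto_atTop_zero.norm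
  obtain ⟨C, hC⟩ := h2.bddAbove_range
  exact ⟨C, fun n => hC ⟨n, rfl⟩⟩

lemma summable_coeff {c : ℕ → ℂ} {ψ : ℂ → ℂ}
    (h : ∀ z ∈ ball (0:ℂ) 1, HasSum (fun k => c k * z ^ k) (ψ z)) {s : ℝ}
    (h0 : 0 ≤ s) (h1 : s < 1) : Summable fun k => ‖c k‖ * s ^ k := by
  set t : ℝ := (s + 1) / 2 with ht
  have hst : s < t := by rw [ht]; linarith
  have ht0 : 0 < t := by rw [ht]; linarith
  have ht1 : t < 1 := by rw [ht]; linarith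
  have hmem : (t : ℂ) ∈ ball (0:ℂ) 1 := by
    rw [mem_ball_zero_iff, Complex.norm_real, Real.norm_of_nonneg ht0.le]
    exact ht1
  obtain ⟨C, hC⟩ := bound_of_summable (h _ hmem).summable
  have hCge : ∀ k, ‖c k‖ * t ^ k ≤ C := by
    intro k
    have := hC k
    rwa [norm_mul, norm_pow, Complex.norm_real, Real.norm_of_nonneg ht0.le] at this
  have hgeom : Summable fun k => C * (s / t) ^ k := by
    apply Summable.mul_left
    exact summable_geometric_of_lt_one (by positivity) (by rw [div_lt_one ht0]; exact hst)
  refine hgeom.of_nonneg_of_le (fun k => by positivity) fun k => ?_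
  have htk : (0:ℝ) < t ^ k := by positivity
  have hpow : s ^ k = (s / t) ^ k * t ^ k := by
    rw [div_pow, div_mul_cancel₀ _ (ne_of_gt htk)]
  rw [hpow]
  have h2 : (0:ℝ) ≤ (s/t)^k := by positivity
  nlinarith [hCge k]

lemma mul_conj_one {μ : ℂ} (h : ‖μ‖ = 1) : μ * conj μ = 1 := by
  rw [Complex.mul_conj]
  norm_cast
  rw [Complex.normSq_eq_norm_sq]
  simp [h]



lemma omega_norm_one {m : ℕ} : ‖Complex.exp (2*(Real.pi:ℂ)*I/(m:ℂ))‖ = 1 := by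
  rcases Nat.eq_zero_or_pos m with hm | hm
  · subst hm; norm_num
  have : 2*(Real.pi:ℂ)*I/(m:ℂ) = ((2*Real.pi/m : ℝ) : ℂ) * I := by push_cast; ring
  rw [this, Complex.norm_exp_ofReal_mul_I]

lemma omega_pow_ne_one {m : ℕ} (hm : 0 < m) {d : ℕ} (hd0 : 0 < d) (hdm : d < m) :
    Complex.exp (2*(Real.pi:ℂ)*I/(m:ℂ)) ^ d ≠ 1 := by
  rw [← Complex.exp_nat_mul]
  intro hx
  rw [Complex.exp_eq_one_iff] at hx
  obtain ⟨n, hn⟩ := hx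
  have hm' : (m:ℂ) ≠ 0 := Nat.cast_ne_zero.mpr hm.ne'
  have hπ : ((Real.pi:ℝ):ℂ) ≠ 0 := Complex.ofReal_ne_zero.mpr Real.pi_ne_zero
  have key : (d:ℂ) = n * m := by
    field_simp at hn
    have h2 : (2:ℂ) * Real.pi * I ≠ 0 :=
      mul_ne_zero (mul_ne_zero two_ne_zero hπ) Complex.I_ne_zero
    apply mul_right_cancel₀ h2
    linear_combination (2 * (Real.pi:ℂ) * I) * hn
  have key2 : (d:ℤ) = n * m := by exact_mod_cast key
  have hd0' : (0:ℤ) < d := by exact_mod_cast hd0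
  have hdm' : (d:ℤ) < m := by exact_mod_cast hdm
  have hm0' : (0:ℤ) < m := by exact_mod_cast hm
  rcases le_or_gt n 0 with hn0 | hn1
  · nlinarith [mul_le_mul_of_nonneg_right hn0 hm0'.le]
  · nlinarith [mul_le_mul_of_nonneg_right (by omega : (1:ℤ) ≤ n) hm0'.le]

lemma unit_pow_cancel {ω : ℂ} (hu : ω * conj ω = 1) {p q : ℕ} (hpq : q ≤ p) :
    ω ^ p * conj ω ^ q = ω ^ (p - q) := by
  have h1 : ω ^ p = ω ^ (p - q) * ω ^ q := by rw [← pow_add]; congr 1; omega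
  rw [h1, mul_assoc, ← mul_pow, hu, one_pow, mul_one]

lemma orth {m : ℕ} (hm : 0 < m) {p q : ℕ} (hp : p < m) (hq : q < m) :
    ∑ j ∈ range m, (Complex.exp (2*(Real.pi:ℂ)*I/(m:ℂ)) ^ p * conj (Complex.exp (2*(Real.pi:ℂ)*I/(m:ℂ))) ^ q) ^ j
      = if p = q then (m:ℂ) else 0 := by
  set ω := Complex.exp (2*(Real.pi:ℂ)*I/(m:ℂ)) with hωdef
  have hu : ω * conj ω = 1 := mul_conj_one omega_norm_one
  have hωm : ω ^ m = 1 := by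
    rw [hωdef, ← Complex.exp_nat_mul]
    have hm' : (m:ℂ) ≠ 0 := Nat.cast_ne_zero.mpr hm.ne'
    have : (m:ℂ) * (2*(Real.pi:ℂ)*I/(m:ℂ)) = 2*(Real.pi:ℂ)*I := by
      field_simp
    rw [this, Complex.exp_two_pi_mul_I]
  by_cases hpq : p = q
  · subst hpq
    rw [if_pos rfl, ← mul_pow, hu, one_pow]
    simp
  · rw [if_neg hpq]
    have hxm : (ω ^ p * conj ω ^ q) ^ m = 1 := by
      rw [mul_pow, ← pow_mul, mul_comm p m, pow_mul, hωm, one_pow, one_mul,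
        ← pow_mul, mul_comm q m, pow_mul, ← map_pow, hωm]
      simp
    have hx1 : ω ^ p * conj ω ^ q ≠ 1 := by
      rcases lt_or_gt_of_ne hpq with hlt | hgt
      · intro hx
        have hc : conj (ω ^ p * conj ω ^ q) = 1 := by rw [hx]; simp
        rw [map_mul, map_pow, map_pow, Complex.conj_conj, mul_comm] at hc
        rw [unit_pow_cancel hu hlt.le] at hc
        exact omega_pow_ne_one hm (by omega) (by omega) hc
      · rw [unit_pow_cancel hu hgt.le]
        exact omega_pow_ne_one hm (by omega) (by omega)
    rw [geom_sum_eq hx1, hxm, sub_self, zero_div]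

lemma sum_sq_roots {m L : ℕ} (hm : 0 < m) (hL : L ≤ m) (h : ℕ → ℂ) :
    ∑ j ∈ range m, ‖∑ p ∈ range L, h p * Complex.exp (2*(Real.pi:ℂ)*I/(m:ℂ)) ^ (j*p)‖^2
      = m * ∑ p ∈ range L, ‖h p‖^2 := by
  set ω := Complex.exp (2*(Real.pi:ℂ)*I/(m:ℂ)) with hωdef
  apply Complex.ofReal_injective
  push_cast
  have hsq : ∀ z : ℂ, ((‖z‖:ℂ))^2 = z * conj z := by
    intro z
    rw [← Complex.ofReal_pow, ← Complex.normSq_eq_norm_sq]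
    exact (Complex.mul_conj z).symm
  calc ∑ j ∈ range m, ((‖∑ p ∈ range L, h p * ω ^ (j*p)‖ : ℂ))^2
      = ∑ j ∈ range m, ∑ p ∈ range L, ∑ q ∈ range L,
          (h p * conj (h q)) * ((ω ^ p * conj ω ^ q) ^ j) := by
        refine Finset.sum_congr rfl fun j _ => ?_
        rw [hsq, map_sum, sum_mul_sum]
        refine Finset.sum_congr rfl fun p _ => Finset.sum_congr rfl fun q _ => ?_
        rw [map_mul, map_pow, mul_comm j p, mul_comm j q, pow_mul, pow_mul, mul_pow]
        ring
    _ = ∑ p ∈ range L, ∑ q ∈ range L,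
          (h p * conj (h q)) * ∑ j ∈ range m, (ω ^ p * conj ω ^ q) ^ j := by
        rw [Finset.sum_comm]
        refine Finset.sum_congr rfl fun p _ => ?_
        rw [Finset.sum_comm]
        refine Finset.sum_congr rfl fun q _ => ?_
        rw [Finset.mul_sum]
    _ = ∑ p ∈ range L, (h p * conj (h p)) * m := by
        refine Finset.sum_congr rfl fun p hp => ?_
        rw [Finset.sum_eq_single p]
        · rw [orth hm (by simp at hp; omega) (by simp at hp; omega), if_pos rfl]
        · intro q hq hqp
          rw [orth hm (by simp at hp; omega) (by simp at hq; omega), if_neg (Ne.symm hqp), mul_zero]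
        · intro hp'; exact absurd hp hp'
    _ = (m:ℂ) * ∑ p ∈ range L, ((‖h p‖:ℂ))^2 := by
        rw [Finset.mul_sum]
        refine Finset.sum_congr rfl fun p _ => ?_
        rw [hsq]
        ring


lemma core {ψ : ℂ → ℂ} {c : ℕ → ℂ} {M : ℝ}
    (hψ : ∀ z ∈ ball (0:ℂ) 1, HasSum (fun k => c k * z ^ k) (ψ z))
    (hM : ∀ z ∈ ball (0:ℂ) 1, ‖ψ z‖ ≤ M)
    (f : ℕ → ℂ) (N : ℕ) (hf : ∀ i, N ≤ i → f i = 0)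
    {r : ℝ} (hr0 : 0 ≤ r) (hr1 : r < 1) :
    ∑ d ∈ range N, ‖∑ k ∈ range N, c k * (r:ℂ) ^ k * f (d + k)‖^2
      ≤ M^2 * ∑ n ∈ range N, ‖f n‖^2 := by
  have hM0 : 0 ≤ M := le_trans (norm_nonneg _) (hM 0 (by simp))
  set S : ℝ := ∑ n ∈ range N, ‖f n‖^2 with hSdef
  have hS0 : 0 ≤ S := Finset.sum_nonneg fun n _ => by positivity
  have key : ∀ ε : ℝ, 0 < ε →
      ∑ d ∈ range N, ‖∑ k ∈ range N, c k * (r:ℂ) ^ k * f (d + k)‖^2 ≤ (M+ε)^2 * S := by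
    intro ε hε
    rcases Nat.eq_zero_or_pos N with hN | hN
    · rw [hN]
      simp only [Finset.range_zero, Finset.sum_empty]
      positivity
    have hsum_r : Summable fun k => ‖c k‖ * r^k := summable_coeff hψ hr0 hr1
    have htail : Tendsto (fun K => ∑' k, ‖c (k+K)‖ * r^(k+K)) atTop (𝓝 0) :=
      tendsto_sum_nat_add (fun k => ‖c k‖ * r ^ k)
    obtain ⟨K, hKN, hKtail⟩ :
        ∃ K, N ≤ K ∧ (∑' k, ‖c (k+K)‖ * r^(k+K)) < ε := by
      have h1 := (htail.eventually_lt_const hε).and (eventually_ge_atTop N)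
      obtain ⟨K, hK1, hK2⟩ := h1.exists
      exact ⟨K, hK2, hK1⟩
    set m : ℕ := N + K with hmdef
    have hm : 0 < m := by omega
    set ω : ℂ := Complex.exp (2*(Real.pi:ℂ)*I/(m:ℂ)) with hωdef
    have hω1 : ‖ω‖ = 1 := by rw [hωdef]; exact omega_norm_one
    have hu : ω * conj ω = 1 := mul_conj_one hω1
    set bb : ℕ → ℂ := fun k => c k * (r:ℂ)^k with hbbdef
    set A : ℕ → ℂ := fun j => ∑ n ∈ range N, f n * ω^(j*n) with hAdef
    set B : ℕ → ℂ := fun j => ∑ k ∈ range K, bb k * conj ω ^ (j*k) with hBdef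
    have hB : ∀ j, ‖B j‖ ≤ M + ε := by
      intro j
      set z : ℂ := (r:ℂ) * conj ω ^ j with hzdef
      have hznorm : ‖z‖ = r := by
        rw [hzdef, norm_mul, norm_pow, RCLike.norm_conj, hω1, one_pow, mul_one,
          Complex.norm_real, Real.norm_of_nonneg hr0]
      have hz : z ∈ ball (0:ℂ) 1 := by rw [mem_ball_zero_iff, hznorm]; exact hr1
      have hsum := hψ z hz
      have hterm : ∀ k, c k * z^k = bb k * conj ω ^ (j*k) := by
        intro k
        show c k * ((r:ℂ) * conj ω ^ j)^k = (c k * (r:ℂ)^k) * conj ω ^ (j*k)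
        rw [mul_pow, ← pow_mul, mul_comm j k, mul_assoc]
      have hBj : B j = ∑ k ∈ range K, c k * z ^ k :=
        Finset.sum_congr rfl fun k _ => (hterm k).symm
      have hsplit := Summable.sum_add_tsum_nat_add (f := fun k => c k * z^k) K hsum.summable
      rw [hsum.tsum_eq] at hsplit
      have hBj2 : B j = ψ z - ∑' i, c (i+K) * z^(i+K) := by
        rw [hBj, ← hsplit]; ring
      rw [hBj2]
      refine le_trans (norm_sub_le _ _) ?_
      have hnorm_shift : Summable fun i => ‖c (i+K) * z^(i+K)‖ := by
        refine ((summable_nat_add_iff K).mpr hsum_r).congr fun i => ?_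
        rw [norm_mul, norm_pow, hznorm]
      have h2' : ‖∑' i, c (i+K) * z^(i+K)‖ ≤ ∑' i, ‖c (i+K)‖ * r^(i+K) := by
        refine le_trans (norm_tsum_le_tsum_norm hnorm_shift)
          (le_of_eq (tsum_congr fun i => ?_))
        rw [norm_mul, norm_pow, hznorm]
      linarith [hM z hz]
    set hcomb : ℕ → ℂ := fun p => ∑ n ∈ range N, ∑ k ∈ range K,
        if p + k = n + (K-1) then bb k * f n else 0 with hcombdef
    have heval : ∀ j, ∑ p ∈ range m, hcomb p * ω^(j*p) = B j * A j * ω^(j*(K-1)) := by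
      intro j
      have lhs1 : ∑ p ∈ range m, hcomb p * ω^(j*p)
          = ∑ n ∈ range N, ∑ k ∈ range K, ∑ p ∈ range m,
              (if p = n + (K-1) - k then (bb k * f n) * ω^(j*p) else 0) := by
        simp only [hcombdef, Finset.sum_mul]
        rw [Finset.sum_comm]
        refine Finset.sum_congr rfl fun n hn => ?_
        rw [Finset.sum_comm]
        refine Finset.sum_congr rfl fun k hk => Finset.sum_congr rfl fun p _ => ?_
        rw [ite_mul, zero_mul]
        refine if_congr ?_ rfl rfl
        simp only [Finset.mem_range] at hk
        constructor <;> intro h <;> omega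
      rw [lhs1]
      have rhs1 : B j * A j * ω^(j*(K-1))
          = ∑ n ∈ range N, ∑ k ∈ range K, (bb k * f n) * ω^(j*(n + (K-1) - k)) := by
        calc B j * A j * ω ^ (j*(K-1))
            = ∑ k ∈ range K, ∑ n ∈ range N,
                bb k * conj ω ^ (j*k) * (f n * ω^(j*n)) * ω^(j*(K-1)) := by
              simp only [hBdef, hAdef, Finset.sum_mul]
              refine Finset.sum_congr rfl fun k _ => ?_
              rw [Finset.mul_sum, Finset.sum_mul]
          _ = ∑ n ∈ range N, ∑ k ∈ range K, (bb k * f n) * ω^(j*(n + (K-1) - k)) := ?_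
        rw [Finset.sum_comm]
        refine Finset.sum_congr rfl fun n hn => ?_
        refine Finset.sum_congr rfl fun k hk => ?_
        simp only [Finset.mem_range] at hn hk
        have e1 : ω ^ (j*n) * ω ^ (j*(K-1)) = ω ^ (j*(n+(K-1)-k)) * ω ^ (j*k) := by
          rw [← pow_add, ← pow_add, ← Nat.mul_add, ← Nat.mul_add]
          conv_lhs => rw [show n+(K-1) = (n+(K-1)-k)+k from by omega]
        calc bb k * conj ω ^ (j*k) * (f n * ω ^ (j*n)) * ω ^ (j*(K-1))
            = (ω ^ (j*n) * ω ^ (j*(K-1))) * (bb k * f n * conj ω ^ (j*k)) := by ring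
          _ = (ω ^ (j*(n+(K-1)-k)) * ω ^ (j*k)) * (bb k * f n * conj ω ^ (j*k)) := by
              rw [e1]
          _ = (bb k * f n) * ω ^ (j*(n+(K-1)-k)) * (ω * conj ω) ^ (j*k) := by
              rw [mul_pow]; ring
          _ = (bb k * f n) * ω ^ (j*(n+(K-1)-k)) := by rw [hu, one_pow, mul_one]
      rw [rhs1]
      refine Finset.sum_congr rfl fun n hn => Finset.sum_congr rfl fun k hk => ?_
      simp only [Finset.mem_range] at hn hk
      rw [Finset.sum_ite_eq' (range m) (n + (K-1) - k)]
      rw [if_pos]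
      rw [Finset.mem_range]
      omega
    have h2 : ∑ j ∈ range m, ‖∑ p ∈ range m, hcomb p * ω^(j*p)‖^2
        = m * ∑ p ∈ range m, ‖hcomb p‖^2 := by
      rw [hωdef]; exact sum_sq_roots hm le_rfl hcomb
    have h5 : ∑ j ∈ range m, ‖A j‖^2 = m * S := by
      simp only [hAdef, hSdef]
      rw [hωdef]
      exact sum_sq_roots hm (by omega) f
    have h4 : ∑ j ∈ range m, ‖B j * A j * ω^(j*(K-1))‖^2
        ≤ (M+ε)^2 * ∑ j ∈ range m, ‖A j‖^2 := by
      rw [Finset.mul_sum]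
      refine Finset.sum_le_sum fun j _ => ?_
      rw [norm_mul, norm_mul, norm_pow, hω1, one_pow, mul_one, mul_pow]
      have hBj := hB j
      have hA0 : (0:ℝ) ≤ ‖A j‖^2 := by positivity
      have hB2 : ‖B j‖^2 ≤ (M+ε)^2 := by nlinarith [norm_nonneg (B j)]
      nlinarith
    have hdiag : ∀ d, d < N → hcomb (d + (K-1))
        = ∑ k ∈ range N, c k * (r:ℂ)^k * f (d + k) := by
      intro d hd
      simp only [hcombdef]
      rw [Finset.sum_comm]
      have step1 : ∀ k, k < K → (∑ n ∈ range N,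
          if d + (K-1) + k = n + (K-1) then bb k * f n else 0) = bb k * f (d + k) := by
        intro k hk
        have hcg : ∀ n ∈ range N, (if d + (K-1) + k = n + (K-1) then bb k * f n else 0)
            = if n = d + k then bb k * f n else 0 := by
          intro n hn
          refine if_congr ?_ rfl rfl
          constructor <;> intro h <;> omega
        rw [Finset.sum_congr rfl hcg, Finset.sum_ite_eq' (range N) (d+k)]
        by_cases hdk : d + k < N
        · rw [if_pos (Finset.mem_range.mpr hdk)]
        · rw [if_neg (by simp only [Finset.mem_range]; omega),
            hf (d+k) (by omega), mul_zero]
      calc (∑ k ∈ range K, ∑ n ∈ range N,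
              if d + (K-1) + k = n + (K-1) then bb k * f n else 0)
          = ∑ k ∈ range K, bb k * f (d + k) :=
            Finset.sum_congr rfl fun k hk => step1 k (Finset.mem_range.mp hk)
        _ = ∑ k ∈ range N, bb k * f (d + k) := by
            refine (Finset.sum_subset (by
              intro x hx
              simp only [Finset.mem_range] at hx ⊢
              omega) ?_).symm
            intro x hx hnx
            simp only [Finset.mem_range] at hx hnx
            rw [hf (d+x) (by omega), mul_zero]
        _ = ∑ k ∈ range N, c k * (r:ℂ)^k * f (d + k) := rfl
    have h6 : ∑ d ∈ range N, ‖∑ k ∈ range N, c k * (r:ℂ) ^ k * f (d + k)‖^2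
        ≤ ∑ p ∈ range m, ‖hcomb p‖^2 := by
      have e1 : ∑ d ∈ range N, ‖∑ k ∈ range N, c k * (r:ℂ) ^ k * f (d + k)‖^2
          = ∑ d ∈ range N, ‖hcomb (d + (K-1))‖^2 :=
        Finset.sum_congr rfl fun d hd => by rw [hdiag d (Finset.mem_range.mp hd)]
      rw [e1]
      have e2 : ∑ d ∈ range N, ‖hcomb (d + (K-1))‖^2
          = ∑ p ∈ (range N).image (· + (K-1)), ‖hcomb p‖^2 := by
        rw [Finset.sum_image]
        intro x _ y _ hxy
        simp only at hxy
        omega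
      rw [e2]
      refine Finset.sum_le_sum_of_subset_of_nonneg ?_ (fun p _ _ => by positivity)
      intro p hp
      simp only [Finset.mem_image, Finset.mem_range] at hp
      obtain ⟨d, hd, rfl⟩ := hp
      simp only [Finset.mem_range]
      omega
    have hsq : ∑ j ∈ range m, ‖∑ p ∈ range m, hcomb p * ω^(j*p)‖^2
        = ∑ j ∈ range m, ‖B j * A j * ω^(j*(K-1))‖^2 :=
      Finset.sum_congr rfl fun j _ => by rw [heval j]
    have final : (m:ℝ) * ∑ p ∈ range m, ‖hcomb p‖^2 ≤ (M+ε)^2 * ((m:ℝ) * S) := by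
      calc (m:ℝ) * ∑ p ∈ range m, ‖hcomb p‖^2
          = ∑ j ∈ range m, ‖∑ p ∈ range m, hcomb p * ω^(j*p)‖^2 := h2.symm
        _ = ∑ j ∈ range m, ‖B j * A j * ω^(j*(K-1))‖^2 := hsq
        _ ≤ (M+ε)^2 * ∑ j ∈ range m, ‖A j‖^2 := h4
        _ = (M+ε)^2 * ((m:ℝ)*S) := by rw [h5]
    have hmpos : (0:ℝ) < m := by exact_mod_cast hm
    have hfin2 : ∑ p ∈ range m, ‖hcomb p‖^2 ≤ (M+ε)^2 * S := by
      have h7 : (m:ℝ) * ∑ p ∈ range m, ‖hcomb p‖^2 ≤ (m:ℝ) * ((M+ε)^2 * S) := by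
        calc (m:ℝ) * ∑ p ∈ range m, ‖hcomb p‖^2 ≤ (M+ε)^2 * ((m:ℝ) * S) := final
          _ = (m:ℝ) * ((M+ε)^2 * S) := by ring
      exact (mul_le_mul_iff_right₀ hmpos).mp h7
    exact le_trans h6 hfin2
  have hT : Tendsto (fun ε : ℝ => (M+ε)^2*S) (𝓝[>] (0:ℝ)) (𝓝 ((M+0)^2*S)) := by
    apply Tendsto.mono_left _ nhdsWithin_le_nhds
    exact Continuous.tendsto (by continuity) 0
  have hle := ge_of_tendsto hT
    (eventually_nhdsWithin_of_forall fun ε hε => key ε hε)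
  simpa using hle

lemma star {ψ : ℂ → ℂ} {c : ℕ → ℂ} {M : ℝ}
    (hψ : ∀ z ∈ ball (0:ℂ) 1, HasSum (fun k => c k * z ^ k) (ψ z))
    (hM : ∀ z ∈ ball (0:ℂ) 1, ‖ψ z‖ ≤ M)
    (f : ℕ → ℂ) (N : ℕ) (hf : ∀ i, N ≤ i → f i = 0) :
    ∑ d ∈ range N, ‖∑ k ∈ range N, c k * f (d + k)‖^2
      ≤ M^2 * ∑ n ∈ range N, ‖f n‖^2 := by
  have hcont : Tendsto
      (fun r : ℝ => ∑ d ∈ range N, ‖∑ k ∈ range N, c k * (r:ℂ)^k * f (d+k)‖^2)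
      (𝓝[<] (1:ℝ))
      (𝓝 (∑ d ∈ range N, ‖∑ k ∈ range N, c k * ((1:ℝ):ℂ)^k * f (d+k)‖^2)) := by
    apply Tendsto.mono_left _ nhdsWithin_le_nhds
    apply Continuous.tendsto
    apply continuous_finset_sum
    intro d _
    apply Continuous.pow
    apply Continuous.norm
    apply continuous_finset_sum
    intro k _
    exact ((continuous_const.mul ((Complex.continuous_ofReal).pow k)).mul continuous_const)
  have hev : ∀ᶠ r in 𝓝[<] (1:ℝ),
      (fun r : ℝ => ∑ d ∈ range N, ‖∑ k ∈ range N, c k * (r:ℂ)^k * f (d+k)‖^2) r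
        ≤ M^2 * ∑ n ∈ range N, ‖f n‖^2 := by
    have hmem : Set.Ioo (0:ℝ) 1 ∈ 𝓝[<] (1:ℝ) :=
      Ioo_mem_nhdsLT_of_mem (by constructor <;> norm_num)
    refine Filter.eventually_of_mem hmem fun r hr => ?_
    exact core hψ hM f N hf hr.1.le hr.2
  have hle := le_of_tendsto hcont hev
  have : ∑ d ∈ range N, ‖∑ k ∈ range N, c k * ((1:ℝ):ℂ)^k * f (d+k)‖^2
      = ∑ d ∈ range N, ‖∑ k ∈ range N, c k * f (d+k)‖^2 := by
    refine Finset.sum_congr rfl fun d _ => ?_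
    congr 1
    refine congrArg _ (Finset.sum_congr rfl fun k _ => ?_)
    norm_num
  rwa [this] at hle

lemma exists_coToeplitz {ψ : ℂ → ℂ} {M : ℝ}
    (hd : DifferentiableOn ℂ ψ (ball (0:ℂ) 1))
    (hM : ∀ z ∈ ball (0:ℂ) 1, ‖ψ z‖ ≤ M) :
    ∃ (G : H2 →L[ℂ] H2) (c : ℕ → ℂ),
      (∀ z ∈ ball (0:ℂ) 1, HasSum (fun k => c k * z ^ k) (ψ z)) ∧
      (∀ (f : H2) (n : ℕ), HasSum (fun k => c k * f (n + k)) (G f n)) ∧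
      ‖G‖ ≤ M := by
  have hM0 : 0 ≤ M := le_trans (norm_nonneg _) (hM 0 (by simp))
  set c : ℕ → ℂ := fun k => (Nat.factorial k : ℂ)⁻¹ * iteratedDeriv k ψ 0 with hcdef
  have hsum : ∀ z ∈ ball (0:ℂ) 1, HasSum (fun k => c k * z ^ k) (ψ z) := by
    intro z hz
    have h := Complex.hasSum_taylorSeries_on_ball hd hz
    have heq : (fun k : ℕ => (Nat.factorial k : ℂ)⁻¹ • (z - 0) ^ k • iteratedDeriv k ψ 0)
        = fun k => c k * z ^ k := by
      funext k
      simp only [hcdef, sub_zero, smul_eq_mul]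
      ring
    rwa [heq] at h
  -- ℓ² bound on coefficients
  have hsq_bound : ∀ KK : ℕ, ∑ k ∈ range KK, ‖c k‖^2 ≤ M^2 := by
    intro KK
    rcases Nat.eq_zero_or_pos KK with h0 | hKK
    · subst h0; simp; positivity
    set f : ℕ → ℂ := fun m => if m = KK - 1 then 1 else 0 with hfdef
    have hf : ∀ i, KK ≤ i → f i = 0 := by
      intro i hi
      simp only [hfdef]
      rw [if_neg (by omega)]
    have hstar := star hsum hM f KK hf
    have hinner : ∀ d, d < KK → ∑ k ∈ range KK, c k * f (d + k) = c (KK - 1 - d) := by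
      intro d hd
      have hcg : ∀ k ∈ range KK, c k * f (d + k) = if k = KK - 1 - d then c k else 0 := by
        intro k hk
        simp only [Finset.mem_range] at hk
        simp only [hfdef, mul_ite, mul_one, mul_zero]
        refine if_congr ?_ rfl rfl
        constructor <;> intro h <;> omega
      rw [Finset.sum_congr rfl hcg, Finset.sum_ite_eq' (range KK) (KK - 1 - d)]
      rw [if_pos (Finset.mem_range.mpr (by omega))]
    have hL : ∑ d ∈ range KK, ‖∑ k ∈ range KK, c k * f (d + k)‖^2
        = ∑ k ∈ range KK, ‖c k‖^2 := by
      calc ∑ d ∈ range KK, ‖∑ k ∈ range KK, c k * f (d + k)‖^2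
          = ∑ d ∈ range KK, ‖c (KK - 1 - d)‖^2 :=
            Finset.sum_congr rfl fun d hd => by
              rw [hinner d (Finset.mem_range.mp hd)]
        _ = ∑ k ∈ range KK, ‖c k‖^2 := Finset.sum_range_reflect (fun k => ‖c k‖^2) KK
    have hR : ∑ n ∈ range KK, ‖f n‖^2 = 1 := by
      have : ∀ n ∈ range KK, ‖f n‖^2 = if n = KK - 1 then 1 else 0 := by
        intro n _
        simp only [hfdef]
        by_cases h : n = KK - 1 <;> simp [h]
      rw [Finset.sum_congr rfl this, Finset.sum_ite_eq' (range KK) (KK - 1)]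
      rw [if_pos (Finset.mem_range.mpr (by omega))]
    rw [hL, hR, mul_one] at hstar
    exact hstar
  have hc2 : Summable fun k => ‖c k‖^2 :=
    summable_of_sum_range_le (fun n => by positivity) hsq_bound
  -- summability of the defining series
  have hshift : ∀ (f : H2) (n : ℕ), Summable fun k => ‖f (n + k)‖^2 := by
    intro f n
    refine ((summable_nat_add_iff n).mpr (summable_sq f)).congr fun k => ?_
    rw [add_comm]
  have hsummand : ∀ (f : H2) (n : ℕ), Summable fun k => c k * f (n + k) := by
    intro f n
    apply Summable.of_norm
    refine Summable.of_nonneg_of_le (fun k => norm_nonneg _) (fun k => ?_)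
      (((hc2.add (hshift f n)).div_const 2))
    rw [norm_mul]
    nlinarith [sq_nonneg (‖c k‖ - ‖f (n + k)‖), norm_nonneg (c k), norm_nonneg (f (n+k))]
  set Gfun : H2 → ℕ → ℂ := fun f n => ∑' k, c k * f (n + k) with hGdef
  -- partial-sum bound
  have hbound : ∀ (f : H2) (N₀ : ℕ), ∑ d ∈ range N₀, ‖Gfun f d‖^2 ≤ M^2 * ‖f‖^2 := by
    intro f N₀
    set fT : ℕ → ℕ → ℂ := fun N m => if m < N then f m else 0 with hfTdef
    have hfT : ∀ N, ∀ i, N ≤ i → fT N i = 0 := by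
      intro N i hi
      simp only [hfTdef]
      rw [if_neg (by omega)]
    have hpartial : ∀ N d, ∑ k ∈ range N, c k * fT N (d + k)
        = ∑ k ∈ range (N - d), c k * f (d + k) := by
      intro N d
      have h1 : ∀ k ∈ range N, c k * fT N (d + k)
          = if k < N - d then c k * f (d + k) else 0 := by
        intro k hk
        simp only [hfTdef, mul_ite, mul_zero]
        refine if_congr ?_ rfl rfl
        constructor <;> intro h <;> omega
      rw [Finset.sum_congr rfl h1]
      rw [← Finset.sum_subset (Finset.range_subset_range.mpr (by omega : N - d ≤ N))]
      · refine Finset.sum_congr rfl fun k hk => ?_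
        rw [if_pos (Finset.mem_range.mp hk)]
      · intro k _ hk
        rw [if_neg (by simpa using hk)]
    have hkey : ∀ d, Tendsto (fun N => ∑ k ∈ range N, c k * fT N (d + k))
        atTop (𝓝 (Gfun f d)) := by
      intro d
      have h1 := (hsummand f d).hasSum.tendsto_sum_nat
      have h2 : Tendsto (fun N : ℕ => N - d) atTop atTop := tendsto_sub_atTop_nat d
      have h3 := h1.comp h2
      refine h3.congr fun N => ?_
      exact (hpartial N d).symm
    have htends : Tendsto (fun N => ∑ d ∈ range N₀, ‖∑ k ∈ range N, c k * fT N (d + k)‖^2)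
        atTop (𝓝 (∑ d ∈ range N₀, ‖Gfun f d‖^2)) := by
      apply tendsto_finset_sum
      intro d _
      exact ((hkey d).norm).pow 2
    refine le_of_tendsto htends ?_
    filter_upwards [eventually_ge_atTop N₀] with N hN
    have hstar := star hsum hM (fT N) N (hfT N)
    have hmono : ∑ d ∈ range N₀, ‖∑ k ∈ range N, c k * fT N (d + k)‖^2
        ≤ ∑ d ∈ range N, ‖∑ k ∈ range N, c k * fT N (d + k)‖^2 :=
      Finset.sum_le_sum_of_subset_of_nonneg (Finset.range_subset_range.mpr hN)
        (fun _ _ _ => by positivity)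
    have hfnorm : ∑ n ∈ range N, ‖fT N n‖^2 ≤ ‖f‖^2 := by
      have he : ∀ n ∈ range N, ‖fT N n‖^2 = ‖f n‖^2 := by
        intro n hn
        simp only [hfTdef]
        rw [if_pos (Finset.mem_range.mp hn)]
      rw [Finset.sum_congr rfl he, norm_sq_eq]
      exact (summable_sq f).sum_le_tsum (range N) (fun _ _ => by positivity)
    calc ∑ d ∈ range N₀, ‖∑ k ∈ range N, c k * fT N (d + k)‖^2
        ≤ ∑ d ∈ range N, ‖∑ k ∈ range N, c k * fT N (d + k)‖^2 := hmono
      _ ≤ M^2 * ∑ n ∈ range N, ‖fT N n‖^2 := hstar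
      _ ≤ M^2 * ‖f‖^2 := by nlinarith [hfnorm]
  have hmem : ∀ f : H2, Memℓp (Gfun f) 2 := by
    intro f
    exact memℓp_of_sq (summable_of_sum_range_le (fun n => by positivity)
      (fun N₀ => hbound f N₀))
  set G0 : H2 → H2 := fun f => ⟨Gfun f, hmem f⟩ with hG0def
  have hG0app : ∀ (f : H2) (n : ℕ), (G0 f : ∀ _ : ℕ, ℂ) n = Gfun f n := fun f n => rfl
  have hadd : ∀ f g : H2, G0 (f + g) = G0 f + G0 g := by
    intro f g
    apply h2_ext
    intro n
    rw [lp.coeFn_add, Pi.add_apply, hG0app, hG0app, hG0app, hGdef]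
    simp only []
    have : ∀ k : ℕ, c k * (f + g) (n + k) = c k * f (n + k) + c k * g (n + k) := by
      intro k
      rw [lp.coeFn_add, Pi.add_apply]
      ring
    rw [tsum_congr this, Summable.tsum_add (hsummand f n) (hsummand g n)]
  have hsmul : ∀ (a : ℂ) (f : H2), G0 (a • f) = a • G0 f := by
    intro a f
    apply h2_ext
    intro n
    rw [lp.coeFn_smul, Pi.smul_apply, hG0app, hG0app, hGdef]
    simp only [smul_eq_mul]
    have : ∀ k : ℕ, c k * (a • f) (n + k) = a * (c k * f (n + k)) := by
      intro k
      rw [lp.coeFn_smul, Pi.smul_apply, smul_eq_mul]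
      ring
    rw [tsum_congr this, tsum_mul_left]
  have hnorm : ∀ f : H2, ‖G0 f‖ ≤ M * ‖f‖ := by
    intro f
    refine norm_le_of_sq_le (by positivity) ?_
    have h1 : ‖G0 f‖^2 = ∑' n, ‖Gfun f n‖^2 := by
      rw [norm_sq_eq]
    rw [h1]
    have h2 : ∑' n, ‖Gfun f n‖^2 ≤ M^2 * ‖f‖^2 :=
      Real.tsum_le_of_sum_range_le (fun n => by positivity) (fun N₀ => hbound f N₀)
    calc ∑' n, ‖Gfun f n‖^2 ≤ M^2 * ‖f‖^2 := h2
      _ = (M * ‖f‖)^2 := by ring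
  set Glin : H2 →ₗ[ℂ] H2 :=
    { toFun := G0, map_add' := hadd, map_smul' := hsmul } with hGlin
  refine ⟨LinearMap.mkContinuous Glin M hnorm, c, hsum, ?_, ?_⟩
  · intro f n
    have h1 : (LinearMap.mkContinuous Glin M hnorm) f n = Gfun f n := rfl
    rw [h1]
    exact (hsummand f n).hasSum
  · exact LinearMap.mkContinuous_norm_le Glin hM0 hnorm

def convCoef (a b : ℕ → ℂ) : ℕ → ℂ := fun p => ∑ k ∈ range (p+1), a k * b (p - k)

lemma hasSum_conv {a b : ℕ → ℂ} {z A0 B0 : ℂ}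
    (hna : Summable fun k => ‖a k‖ * ‖z‖^k) (hnb : Summable fun k => ‖b k‖ * ‖z‖^k)
    (ha : HasSum (fun k => a k * z^k) A0) (hb : HasSum (fun k => b k * z^k) B0) :
    HasSum (fun p => convCoef a b p * z^p) (A0 * B0) := by
  have hna' : Summable fun k => ‖a k * z^k‖ :=
    hna.congr fun k => by rw [norm_mul, norm_pow]
  have hnb' : Summable fun k => ‖b k * z^k‖ :=
    hnb.congr fun k => by rw [norm_mul, norm_pow]
  have h := hasSum_sum_range_mul_of_summable_norm hna' hnb'
  rw [ha.tsum_eq, hb.tsum_eq] at h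
  have he : (fun n => ∑ k ∈ range (n+1), (a k * z^k) * (b (n-k) * z^(n-k)))
      = fun p => convCoef a b p * z^p := by
    funext p
    rw [convCoef, Finset.sum_mul]
    refine Finset.sum_congr rfl fun k hk => ?_
    simp only [Finset.mem_range] at hk
    have : z^k * z^(p-k) = z^p := by
      rw [← pow_add]
      congr 1
      omega
    calc a k * z^k * (b (p-k) * z^(p-k)) = a k * b (p-k) * (z^k * z^(p-k)) := by ring
      _ = a k * b (p-k) * z^p := by rw [this]
  rwa [he] at h

lemma summable_conv_norm {a b : ℕ → ℂ} {s : ℝ} (hs : 0 ≤ s)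
    (hna : Summable fun k => ‖a k‖ * s^k) (hnb : Summable fun k => ‖b k‖ * s^k) :
    Summable fun p => ‖convCoef a b p‖ * s^p := by
  have hna' : Summable fun k => ‖(‖a k‖ * s^k)‖ :=
    hna.congr fun k => (Real.norm_of_nonneg (by positivity)).symm
  have hnb' : Summable fun k => ‖(‖b k‖ * s^k)‖ :=
    hnb.congr fun k => (Real.norm_of_nonneg (by positivity)).symm
  have hcp := summable_sum_mul_range_of_summable_norm' hna' hna hnb' hnb
  refine hcp.of_nonneg_of_le (fun p => by positivity) fun p => ?_
  have h1 : ‖convCoef a b p‖ * s^p ≤ (∑ k ∈ range (p+1), ‖a k * b (p-k)‖) * s^p := by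
    have := norm_sum_le (range (p+1)) (fun k => a k * b (p - k))
    have hsp : (0:ℝ) ≤ s^p := by positivity
    exact mul_le_mul_of_nonneg_right this hsp
  refine le_trans h1 (le_of_eq ?_)
  rw [Finset.sum_mul]
  refine Finset.sum_congr rfl fun k hk => ?_
  simp only [Finset.mem_range] at hk
  rw [norm_mul]
  have : s^k * s^(p-k) = s^p := by
    rw [← pow_add]
    congr 1
    omega
  calc ‖a k‖ * ‖b (p-k)‖ * s^p = ‖a k‖ * ‖b (p-k)‖ * (s^k * s^(p-k)) := by rw [this]
    _ = ‖a k‖ * s^k * (‖b (p-k)‖ * s^(p-k)) := by ring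

def deltaCoef : ℕ → ℂ := fun p => if p = 0 then 1 else 0

lemma hasSum_delta (z : ℂ) : HasSum (fun p => deltaCoef p * z^p) 1 := by
  have h := hasSum_single (f := fun p => deltaCoef p * z^p) 0
    (by intro b hb; simp [deltaCoef, hb])
  simpa [deltaCoef] using h

lemma summable_delta_norm (s : ℝ) : Summable fun p => ‖deltaCoef p‖ * s^p := by
  apply summable_of_ne_finset_zero (s := {0})
  intro p hp
  simp only [Finset.mem_singleton] at hp
  simp [deltaCoef, hp]

lemma coeff_unique {a b : ℕ → ℂ} {v : ℂ → ℂ}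
    (ha : ∀ z ∈ ball (0:ℂ) 1, HasSum (fun k => a k * z^k) (v z))
    (hb : ∀ z ∈ ball (0:ℂ) 1, HasSum (fun k => b k * z^k) (v z)) : a = b := by
  have mk : ∀ (c : ℕ → ℂ), (∀ z ∈ ball (0:ℂ) 1, HasSum (fun k => c k * z^k) (v z)) →
      HasFPowerSeriesAt v
        (fun n => ContinuousMultilinearMap.mkPiRing ℂ (Fin n) (c n)) 0 := by
    intro c hc
    set p : FormalMultilinearSeries ℂ ℂ ℂ :=
      fun n => ContinuousMultilinearMap.mkPiRing ℂ (Fin n) (c n) with hpdef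
    have hhalf : ((1/2 : ℝ) : ℂ) ∈ ball (0:ℂ) 1 := by
      rw [mem_ball_zero_iff, Complex.norm_real, Real.norm_of_nonneg (by norm_num)]
      norm_num
    obtain ⟨C, hC⟩ := bound_of_summable (hc _ hhalf).summable
    have hrad : ((1/2 : NNReal) : ENNReal) ≤ p.radius := by
      apply p.le_radius_of_bound C
      intro n
      have := hC n
      rw [norm_mul, norm_pow, Complex.norm_real, Real.norm_of_nonneg (by norm_num)] at this
      simpa [hpdef, ContinuousMultilinearMap.norm_mkPiRing] using this
    refine ⟨((1/2 : NNReal) : ENNReal), ?_⟩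
    refine ⟨hrad, by norm_num, ?_⟩
    intro y hy
    rw [Metric.emetric_ball_nnreal] at hy
    have hy1 : y ∈ ball (0:ℂ) 1 := by
      rw [mem_ball_zero_iff]
      rw [mem_ball_zero_iff] at hy
      calc ‖y‖ < ((1/2 : NNReal) : ℝ) := hy
        _ < 1 := by norm_num
    have h := hc y hy1
    have he : (fun n => p n fun _ => y) = fun k => c k * y^k := by
      funext n
      simp only [hpdef, ContinuousMultilinearMap.mkPiRing_apply, Finset.prod_const,
        Finset.card_univ, Fintype.card_fin, smul_eq_mul]
      ring
    rw [he, zero_add]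
    exact h
  have heq := (mk a ha).eq_formalMultilinearSeries (mk b hb)
  funext k
  have hk := congrFun heq k
  have h1 : (ContinuousMultilinearMap.mkPiRing ℂ (Fin k) (a k)) (fun _ => (1:ℂ))
      = (ContinuousMultilinearMap.mkPiRing ℂ (Fin k) (b k)) (fun _ => (1:ℂ)) := by
    rw [hk]
  simpa [ContinuousMultilinearMap.mkPiRing_apply] using h1

lemma double_sum_conv (a b g : ℕ → ℂ) (N j : ℕ) (hg : ∀ i, N ≤ i → g i = 0) :
    ∑ k ∈ range N, a k * ∑ i ∈ range N, b i * g (j + k + i)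
      = ∑ p ∈ range N, convCoef a b p * g (j + p) := by
  have rhs : ∑ p ∈ range N, convCoef a b p * g (j + p)
      = ∑ p ∈ range N, ∑ k ∈ range (p+1), a k * b (p-k) * g (j + p) := by
    refine Finset.sum_congr rfl fun p _ => ?_
    rw [convCoef, Finset.sum_mul]
  have lhs : ∑ k ∈ range N, a k * ∑ i ∈ range N, b i * g (j + k + i)
      = ∑ k ∈ range N, ∑ i ∈ range (N - k), a k * (b i * g (j + k + i)) := by
    refine Finset.sum_congr rfl fun k hk => ?_
    simp only [Finset.mem_range] at hk
    rw [Finset.mul_sum]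
    refine (Finset.sum_subset (Finset.range_subset_range.mpr (by omega)) ?_).symm
    intro i hi hni
    simp only [Finset.mem_range] at hi hni
    rw [hg (j + k + i) (by omega), mul_zero, mul_zero]
  rw [lhs, rhs]
  rw [Finset.sum_sigma', Finset.sum_sigma']
  refine Finset.sum_nbij' (fun x => ⟨x.1 + x.2, x.1⟩) (fun y => ⟨y.2, y.1 - y.2⟩)
    ?_ ?_ ?_ ?_ ?_
  · rintro ⟨k, i⟩ hx
    simp only [Finset.mem_sigma, Finset.mem_range] at hx ⊢
    omega
  · rintro ⟨p, k⟩ hy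
    simp only [Finset.mem_sigma, Finset.mem_range] at hy ⊢
    omega
  · rintro ⟨k, i⟩ hx
    simp only [Finset.mem_sigma, Finset.mem_range] at hx
    have e : k + i - k = i := by omega
    simp [Sigma.mk.inj_iff, e]
  · rintro ⟨p, k⟩ hy
    simp only [Finset.mem_sigma, Finset.mem_range] at hy
    have e : k + (p - k) = p := by omega
    simp [Sigma.mk.inj_iff, e]
  · rintro ⟨k, i⟩ hx
    simp only [Finset.mem_sigma, Finset.mem_range] at hx
    dsimp only
    have h1 : k + i - k = i := by omega
    have h2 : j + (k + i) = j + k + i := by omega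
    rw [h1, h2]
    ring

lemma hasSum_fin_eq {c g : ℕ → ℂ} {N n : ℕ} {v : ℂ}
    (hv : HasSum (fun k => c k * g (n + k)) v) (hg : ∀ i, N ≤ i → g i = 0) :
    v = ∑ k ∈ range N, c k * g (n + k) := by
  have h2 : HasSum (fun k => c k * g (n + k)) (∑ k ∈ range N, c k * g (n + k)) := by
    apply hasSum_sum_of_ne_finset_zero
    intro k hk
    simp only [Finset.mem_range, not_lt] at hk
    rw [hg (n + k) (by omega), mul_zero]
  exact hv.unique h2

lemma exists_dilation (μ : ℂ) (hμ : ‖μ‖ = 1) :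
    ∃ D : H2 →L[ℂ] H2, IsDilation μ D ∧ ‖D‖ ≤ 1 := by
  have hmem : ∀ f : H2, Memℓp (fun m => μ^m * f m) 2 := by
    intro f
    apply memℓp_of_sq
    refine (summable_sq f).congr fun m => ?_
    rw [norm_mul, norm_pow, hμ, one_pow, one_mul]
  set D0 : H2 → H2 := fun f => ⟨fun m => μ^m * f m, hmem f⟩ with hD0
  have happ : ∀ (f : H2) m, (D0 f : ∀ _ : ℕ, ℂ) m = μ^m * f m := fun f m => rfl
  have hadd : ∀ f g : H2, D0 (f + g) = D0 f + D0 g := by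
    intro f g
    apply h2_ext
    intro m
    rw [lp.coeFn_add, Pi.add_apply, happ, happ, happ, lp.coeFn_add, Pi.add_apply]
    ring
  have hsmul : ∀ (a : ℂ) (f : H2), D0 (a • f) = a • D0 f := by
    intro a f
    apply h2_ext
    intro m
    rw [lp.coeFn_smul, Pi.smul_apply, happ, happ, lp.coeFn_smul, Pi.smul_apply,
      smul_eq_mul, smul_eq_mul]
    ring
  have hnorm : ∀ f : H2, ‖D0 f‖ ≤ 1 * ‖f‖ := by
    intro f
    refine norm_le_of_sq_le (by positivity) ?_
    rw [norm_sq_eq]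
    have he : ∀ m : ℕ, ‖(D0 f : ∀ _ : ℕ, ℂ) m‖^2 = ‖f m‖^2 := by
      intro m
      rw [happ, norm_mul, norm_pow, hμ, one_pow, one_mul]
    rw [tsum_congr he, ← norm_sq_eq]
    nlinarith [norm_nonneg f]
  set Dlin : H2 →ₗ[ℂ] H2 :=
    { toFun := D0, map_add' := hadd, map_smul' := hsmul } with hDlin
  refine ⟨LinearMap.mkContinuous Dlin 1 hnorm, fun f m => rfl,
    LinearMap.mkContinuous_norm_le Dlin zero_le_one hnorm⟩

lemma dilation_cancel {μ ν : ℂ} {D E : H2 →L[ℂ] H2} (hD : IsDilation μ D)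
    (hE : IsDilation ν E) (h : μ * ν = 1) : D ∘L E = 1 := by
  apply ContinuousLinearMap.ext
  intro f
  apply h2_ext
  intro m
  rw [ContinuousLinearMap.comp_apply, hD, hE, ContinuousLinearMap.one_apply,
    ← mul_assoc, ← mul_pow, h, one_pow, one_mul]

def truncFS (f : H2) (N : ℕ) : H2 :=
  ⟨fun m => if m < N then f m else 0, by
    apply memℓp_of_sq
    refine Summable.of_nonneg_of_le (fun m => by positivity) (fun m => ?_) (summable_sq f)
    by_cases h : m < N <;> simp [h]⟩

def finSupp : Set H2 := {f : H2 | ∃ N : ℕ, ∀ i, N ≤ i → (f : ∀ _ : ℕ, ℂ) i = 0}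

lemma dense_finSupp : Dense finSupp := by
  rw [Metric.dense_iff]
  intro f r hr
  have htail : Tendsto (fun N => ∑' k, ‖f (k + N)‖^2) atTop (𝓝 0) :=
    tendsto_sum_nat_add (fun k => ‖f k‖^2)
  obtain ⟨N, hN⟩ := (htail.eventually_lt_const (by positivity : (0:ℝ) < r^2)).exists
  have htr : ∀ i, N ≤ i → (truncFS f N : ∀ _ : ℕ, ℂ) i = 0 := by
    intro i hi
    show (if i < N then f i else 0) = 0
    rw [if_neg (by omega)]
  refine ⟨truncFS f N, ?_, ⟨N, htr⟩⟩
  rw [mem_ball, dist_eq_norm]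
  have hdiff : ∀ m : ℕ, ‖(truncFS f N - f : H2) m‖^2
      = if m < N then 0 else ‖f m‖^2 := by
    intro m
    rw [lp.coeFn_sub, Pi.sub_apply]
    show ‖(if m < N then f m else 0) - f m‖^2 = _
    by_cases h : m < N <;> simp [h]
  have hsummable : Summable fun m => if m < N then (0:ℝ) else ‖f m‖^2 := by
    refine Summable.of_nonneg_of_le (fun m => by positivity) (fun m => ?_) (summable_sq f)
    by_cases h : m < N
    · rw [if_pos h]; positivity
    · rw [if_neg h]
  have hval : ‖truncFS f N - f‖^2 = ∑' k, ‖f (k + N)‖^2 := by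
    rw [norm_sq_eq, tsum_congr hdiff]
    have hsplit := Summable.sum_add_tsum_nat_add (f := fun m => if m < N then (0:ℝ) else ‖f m‖^2)
      N hsummable
    have h1 : ∑ i ∈ range N, (if i < N then (0:ℝ) else ‖f i‖^2) = 0 := by
      refine Finset.sum_eq_zero fun i hi => ?_
      rw [if_pos (Finset.mem_range.mp hi)]
    have h2 : ∀ k : ℕ, (if k + N < N then (0:ℝ) else ‖f (k + N)‖^2) = ‖f (k + N)‖^2 := by
      intro k
      rw [if_neg (by omega)]
    rw [h1, zero_add] at hsplit
    rw [← hsplit, tsum_congr h2]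
  have : ‖truncFS f N - f‖^2 < r^2 := by rw [hval]; exact hN
  exact lt_of_pow_lt_pow_left₀ 2 hr.le this

lemma clm_ext_finSupp {T S : H2 →L[ℂ] H2}
    (h : ∀ (f : H2) (N : ℕ), (∀ i, N ≤ i → (f : ∀ _ : ℕ, ℂ) i = 0) → T f = S f) :
    T = S := by
  have hcoe : ⇑T = ⇑S := by
    refine Continuous.ext_on dense_finSupp T.continuous S.continuous ?_
    rintro f ⟨N, hN⟩
    exact h f N hN
  exact ContinuousLinearMap.ext fun x => congrFun hcoe x

def ccoef (lam : ℂ) (c : ℕ → ℂ) : ℕ → ℕ → ℂ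
  | 0 => deltaCoef
  | (m+1) => convCoef (fun k => c k * lam^(m*k)) (ccoef lam c m)

lemma ccoef_succ (lam : ℂ) (c : ℕ → ℂ) (m : ℕ) :
    ccoef lam c (m+1) = convCoef (fun k => c k * lam^(m*k)) (ccoef lam c m) := rfl

lemma sum_delta_mul (g : ℕ → ℂ) {N : ℕ} (hN : 0 < N) :
    ∑ k ∈ range N, deltaCoef k * g k = g 0 := by
  rw [Finset.sum_eq_single 0]
  · simp [deltaCoef]
  · intro k _ hk
    simp [deltaCoef, hk]
  · intro h
    exact absurd (Finset.mem_range.mpr hN) h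

lemma mem_ball_rot {lam z : ℂ} (hlam : ‖lam‖ = 1) (j : ℕ) (hz : z ∈ ball (0:ℂ) 1) :
    lam^j * z ∈ ball (0:ℂ) 1 := by
  rw [mem_ball_zero_iff] at hz ⊢
  rw [norm_mul, norm_pow, hlam, one_pow, one_mul]
  exact hz

lemma ccoef_summable {lam : ℂ} {c : ℕ → ℂ} {φ : ℂ → ℂ} (hlam : ‖lam‖ = 1)
    (hφ : ∀ z ∈ ball (0:ℂ) 1, HasSum (fun k => c k * z ^ k) (φ z))
    (m : ℕ) {s : ℝ} (h0 : 0 ≤ s) (h1 : s < 1) :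
    Summable fun p => ‖ccoef lam c m p‖ * s^p := by
  induction m with
  | zero => exact summable_delta_norm s
  | succ m ih =>
    rw [ccoef_succ]
    refine summable_conv_norm h0 ?_ ih
    refine (summable_coeff hφ h0 h1).congr fun k => ?_
    rw [norm_mul, norm_pow, hlam, one_pow, mul_one]

lemma ccoef_hasSum {lam : ℂ} {c : ℕ → ℂ} {φ : ℂ → ℂ} (hlam : ‖lam‖ = 1)
    (hφ : ∀ z ∈ ball (0:ℂ) 1, HasSum (fun k => c k * z ^ k) (φ z)) (m : ℕ) :
    ∀ z ∈ ball (0:ℂ) 1,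
      HasSum (fun p => ccoef lam c m p * z^p) (∏ j ∈ range m, φ (lam^j * z)) := by
  induction m with
  | zero =>
    intro z hz
    simpa [ccoef] using hasSum_delta z
  | succ m ih =>
    intro z hz
    have hz1 : ‖z‖ < 1 := mem_ball_zero_iff.mp hz
    have hmem : lam^m * z ∈ ball (0:ℂ) 1 := mem_ball_rot hlam m hz
    have ha : HasSum (fun k => (c k * lam^(m*k)) * z^k) (φ (lam^m * z)) := by
      have h := hφ _ hmem
      have he : (fun k => c k * (lam^m * z)^k) = fun k => (c k * lam^(m*k)) * z^k := by
        funext k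
        rw [mul_pow, ← pow_mul, mul_assoc]
      rwa [he] at h
    have hna : Summable fun k => ‖c k * lam^(m*k)‖ * ‖z‖^k := by
      refine (summable_coeff hφ (norm_nonneg z) hz1).congr fun k => ?_
      rw [norm_mul, norm_pow, hlam, one_pow, mul_one]
    have hnb : Summable fun p => ‖ccoef lam c m p‖ * ‖z‖^p :=
      ccoef_summable hlam hφ m (norm_nonneg z) hz1
    have h := hasSum_conv hna hnb ha (ih z hz)
    rw [ccoef_succ]
    have hval : φ (lam^m * z) * (∏ j ∈ range m, φ (lam^j * z))
        = ∏ j ∈ range (m+1), φ (lam^j * z) := by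
      rw [Finset.prod_range_succ, mul_comm]
    rwa [hval] at h

lemma pow_formula {lam : ℂ} {c : ℕ → ℂ} {R Φ T : H2 →L[ℂ] H2}
    (hR : IsDilation lam R)
    (hop : ∀ (f : H2) (n : ℕ), HasSum (fun k => c k * f (n + k)) (Φ f n))
    (hT : T = R ∘L Φ) :
    ∀ (m : ℕ) (f : H2) (N : ℕ), (∀ i, N ≤ i → (f : ∀ _ : ℕ, ℂ) i = 0) →
      ∀ j, ((T^m) f : ∀ _ : ℕ, ℂ) j
        = lam^(m*j) * ∑ k ∈ range N, ccoef lam c m k * f (j + k) := by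
  intro m
  induction m with
  | zero =>
    intro f N hf j
    simp only [pow_zero, ContinuousLinearMap.one_apply, Nat.zero_mul, pow_zero, one_mul]
    rcases Nat.eq_zero_or_pos N with hN | hN
    · subst hN
      rw [Finset.range_zero, Finset.sum_empty, hf j (by omega)]
    · show (f : ∀ _ : ℕ, ℂ) j = ∑ k ∈ range N, deltaCoef k * f (j + k)
      rw [sum_delta_mul (fun k => f (j + k)) hN]
      rfl
  | succ m ih =>
    intro f N hf j
    have hTm_supp : ∀ i, N ≤ i → ((T^m) f : ∀ _ : ℕ, ℂ) i = 0 := by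
      intro i hi
      rw [ih f N hf i]
      have hz : ∑ k ∈ range N, ccoef lam c m k * f (i + k) = 0 :=
        Finset.sum_eq_zero fun k _ => by rw [hf (i + k) (by omega), mul_zero]
      rw [hz, mul_zero]
    have hsucc : (T^(m+1)) f = T ((T^m) f) := by
      rw [pow_succ']
      rfl
    have happ : ∀ g : H2, (T g : ∀ _ : ℕ, ℂ) j = lam^j * (Φ g) j := by
      intro g
      rw [hT, ContinuousLinearMap.comp_apply, hR]
    rw [hsucc, happ]
    have hΦg := hasSum_fin_eq (hop ((T^m) f) j) hTm_supp
    rw [hΦg]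
    have hexp : ∀ k ∈ range N, c k * ((T^m) f : ∀ _ : ℕ, ℂ) (j + k)
        = (c k * lam^(m*k)) *
            (lam^(m*j) * ∑ i ∈ range N, ccoef lam c m i * f ((j + k) + i)) := by
      intro k _
      rw [ih f N hf (j + k)]
      rw [Nat.mul_add, pow_add]
      ring
    rw [Finset.sum_congr rfl hexp]
    have hpull : ∑ k ∈ range N, (c k * lam^(m*k)) *
          (lam^(m*j) * ∑ i ∈ range N, ccoef lam c m i * f ((j + k) + i))
        = lam^(m*j) * ∑ k ∈ range N, (c k * lam^(m*k)) *
            ∑ i ∈ range N, ccoef lam c m i * f (j + k + i) := by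
      rw [Finset.mul_sum]
      refine Finset.sum_congr rfl fun k _ => ?_
      ring
    rw [hpull]
    have hdsc := double_sum_conv (fun k => c k * lam^(m*k)) (ccoef lam c m)
      (fun i => f i) N j hf
    rw [hdsc, ← ccoef_succ]
    rw [← mul_assoc]
    have hpow : lam ^ j * lam ^ (m*j) = lam ^ ((m+1)*j) := by
      rw [← pow_add]
      congr 1
      ring
    rw [hpow]

end Stmt6Aux


set_option maxHeartbeats 2000000 in
open Stmt6Aux in
theorem stmt6 (lam : ℂ) (hlam : ‖lam‖ = 1) (φ : ℂ → ℂ) (hφ : InHinf φ)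
    (R Φ T : H2 →L[ℂ] H2) (hR : IsDilation lam R) (hΦ : IsCoToeplitz φ Φ)
    (hT : T = R ∘L Φ)
    (c : ℝ) (hc : 0 < c) (n₀ : ℕ)
    (hlow : ∀ n : ℕ, n₀ ≤ n → ∀ z ∈ ball (0:ℂ) 1,
      c ≤ ‖∏ j ∈ Finset.range n, φ (lam ^ j * z)‖) :
    (∀ n : ℕ, n₀ ≤ n →
      ∃ S : H2 →L[ℂ] H2, (T ^ n) ∘L S = 1 ∧ S ∘L (T ^ n) = 1 ∧ ‖S‖ ≤ 1 / c) ∧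
    ¬ Hypercyclic T := by
  obtain ⟨hφd, M, hMb⟩ := hφ
  obtain ⟨cφ, hc1, hc2⟩ := hΦ
  have part1 : ∀ n : ℕ, n₀ ≤ n →
      ∃ S : H2 →L[ℂ] H2, (T ^ n) ∘L S = 1 ∧ S ∘L (T ^ n) = 1 ∧ ‖S‖ ≤ 1 / c := by
    intro n hn
    set Φn : ℂ → ℂ := fun z => ∏ j ∈ Finset.range n, φ (lam ^ j * z) with hΦndef
    have hΦnlow : ∀ z ∈ ball (0:ℂ) 1, c ≤ ‖Φn z‖ := fun z hz => hlow n hn z hz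
    have hΦnne : ∀ z ∈ ball (0:ℂ) 1, Φn z ≠ 0 := by
      intro z hz h0
      have hl := hΦnlow z hz
      rw [h0, norm_zero] at hl
      linarith
    have hΦnd : DifferentiableOn ℂ Φn (ball (0:ℂ) 1) := by
      have hgen : ∀ nn : ℕ, DifferentiableOn ℂ
          (fun z => ∏ j ∈ Finset.range nn, φ (lam ^ j * z)) (ball (0:ℂ) 1) := by
        intro nn
        induction nn with
        | zero =>
          simp only [Finset.range_zero, Finset.prod_empty]
          exact differentiableOn_const 1
        | succ k ih =>
          have he : (fun z => ∏ j ∈ Finset.range (k+1), φ (lam ^ j * z))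
              = fun z => (∏ j ∈ Finset.range k, φ (lam ^ j * z)) * φ (lam ^ k * z) := by
            funext z
            rw [Finset.prod_range_succ]
          rw [he]
          refine ih.mul ?_
          have hcomp : DifferentiableOn ℂ (φ ∘ (fun z => lam ^ k * z)) (ball (0:ℂ) 1) := by
            refine DifferentiableOn.comp hφd ?_ ?_
            · exact (differentiable_id.const_mul _).differentiableOn
            · intro z hz
              exact mem_ball_rot hlam k hz
          exact hcomp
      exact hgen n
    have hψd : DifferentiableOn ℂ (fun z => (Φn z)⁻¹) (ball (0:ℂ) 1) :=
      hΦnd.inv hΦnne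
    have hψb : ∀ z ∈ ball (0:ℂ) 1, ‖(fun z => (Φn z)⁻¹) z‖ ≤ 1 / c := by
      intro z hz
      show ‖(Φn z)⁻¹‖ ≤ 1 / c
      rw [norm_inv, one_div]
      exact inv_anti₀ hc (hΦnlow z hz)
    obtain ⟨S₀, d, hd1, hd2, hS₀norm⟩ := exists_coToeplitz hψd hψb
    have hconjnorm : ‖(conj lam)^n‖ = 1 := by
      rw [norm_pow, RCLike.norm_conj, hlam, one_pow]
    have hlamn : ‖lam^n‖ = 1 := by rw [norm_pow, hlam, one_pow]
    obtain ⟨Dc, hDc, hDcnorm⟩ := exists_dilation ((conj lam)^n) hconjnorm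
    obtain ⟨Dl, hDl, hDlnorm⟩ := exists_dilation (lam^n) hlamn
    have hcancel1 : (lam^n) * ((conj lam)^n) = 1 := by
      rw [← mul_pow, mul_conj_one hlam, one_pow]
    have hcancel2 : ((conj lam)^n) * (lam^n) = 1 := by rw [mul_comm]; exact hcancel1
    have hDD : Dl ∘L Dc = 1 := dilation_cancel hDl hDc hcancel1
    have hDD' : Dc ∘L Dl = 1 := dilation_cancel hDc hDl hcancel2
    set Ψ : H2 →L[ℂ] H2 := Dc ∘L (T ^ n) with hΨdef
    have hΨcoord : ∀ (f : H2) (N : ℕ), (∀ i, N ≤ i → (f : ∀ _ : ℕ, ℂ) i = 0) →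
        ∀ j, (Ψ f : ∀ _ : ℕ, ℂ) j
          = ∑ k ∈ Finset.range N, ccoef lam cφ n k * f (j + k) := by
      intro f N hf j
      rw [hΨdef, ContinuousLinearMap.comp_apply, hDc]
      rw [pow_formula hR hc2 hT n f N hf j]
      have h1 : ((conj lam)^n)^j * lam^(n*j) = 1 := by
        rw [← pow_mul, ← mul_pow, mul_comm (conj lam) lam, mul_conj_one hlam, one_pow]
      rw [← mul_assoc, h1, one_mul]
    have hΨsupp : ∀ (f : H2) (N : ℕ), (∀ i, N ≤ i → (f : ∀ _ : ℕ, ℂ) i = 0) →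
        (∀ i, N ≤ i → (Ψ f : ∀ _ : ℕ, ℂ) i = 0) := by
      intro f N hf i hi
      rw [hΨcoord f N hf i]
      exact Finset.sum_eq_zero fun k _ => by rw [hf (i+k) (by omega), mul_zero]
    have hS₀coord : ∀ (f : H2) (N : ℕ), (∀ i, N ≤ i → (f : ∀ _ : ℕ, ℂ) i = 0) →
        ∀ j, (S₀ f : ∀ _ : ℕ, ℂ) j = ∑ k ∈ Finset.range N, d k * f (j + k) :=
      fun f N hf j => hasSum_fin_eq (hd2 f j) hf
    have hS₀supp : ∀ (f : H2) (N : ℕ), (∀ i, N ≤ i → (f : ∀ _ : ℕ, ℂ) i = 0) →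
        (∀ i, N ≤ i → (S₀ f : ∀ _ : ℕ, ℂ) i = 0) := by
      intro f N hf i hi
      rw [hS₀coord f N hf i]
      exact Finset.sum_eq_zero fun k _ => by rw [hf (i+k) (by omega), mul_zero]
    have hccsum : ∀ z ∈ ball (0:ℂ) 1,
        HasSum (fun p => ccoef lam cφ n p * z^p) (Φn z) := ccoef_hasSum hlam hc1 n
    have hccsummable : ∀ z : ℂ, z ∈ ball (0:ℂ) 1 →
        Summable fun p => ‖ccoef lam cφ n p‖ * ‖z‖^p :=
      fun z hz => ccoef_summable hlam hc1 n (norm_nonneg z) (mem_ball_zero_iff.mp hz)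
    have hdsummable : ∀ z : ℂ, z ∈ ball (0:ℂ) 1 → Summable fun p => ‖d p‖ * ‖z‖^p :=
      fun z hz => summable_coeff hd1 (norm_nonneg z) (mem_ball_zero_iff.mp hz)
    have hconv1 : convCoef (ccoef lam cφ n) d = deltaCoef := by
      refine coeff_unique (v := fun _ => (1:ℂ)) ?_ ?_
      · intro z hz
        have h := hasSum_conv (hccsummable z hz) (hdsummable z hz) (hccsum z hz) (hd1 z hz)
        rwa [mul_inv_cancel₀ (hΦnne z hz)] at h
      · intro z hz
        exact hasSum_delta z
    have hconv2 : convCoef d (ccoef lam cφ n) = deltaCoef := by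
      refine coeff_unique (v := fun _ => (1:ℂ)) ?_ ?_
      · intro z hz
        have h := hasSum_conv (hdsummable z hz) (hccsummable z hz) (hd1 z hz) (hccsum z hz)
        rwa [inv_mul_cancel₀ (hΦnne z hz)] at h
      · intro z hz
        exact hasSum_delta z
    have hΨS : Ψ ∘L S₀ = 1 := by
      apply clm_ext_finSupp
      intro f N hf
      have hf' : ∀ i, N+1 ≤ i → (f : ∀ _ : ℕ, ℂ) i = 0 := fun i hi => hf i (by omega)
      apply h2_ext
      intro j
      rw [ContinuousLinearMap.comp_apply, ContinuousLinearMap.one_apply]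
      rw [hΨcoord (S₀ f) (N+1) (hS₀supp f (N+1) hf') j]
      have he : ∀ k ∈ Finset.range (N+1), ccoef lam cφ n k * (S₀ f) (j + k)
          = ccoef lam cφ n k * ∑ i ∈ Finset.range (N+1), d i * f ((j + k) + i) := by
        intro k _
        rw [hS₀coord f (N+1) hf' (j + k)]
      rw [Finset.sum_congr rfl he]
      have hdsc := double_sum_conv (ccoef lam cφ n) d
        (f : ∀ _ : ℕ, ℂ) (N+1) j hf'
      rw [hdsc, hconv1]
      rw [sum_delta_mul (fun p => (f : ∀ _ : ℕ, ℂ) (j + p)) (by omega : 0 < N+1)]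
      rfl
    have hSΨ : S₀ ∘L Ψ = 1 := by
      apply clm_ext_finSupp
      intro f N hf
      have hf' : ∀ i, N+1 ≤ i → (f : ∀ _ : ℕ, ℂ) i = 0 := fun i hi => hf i (by omega)
      apply h2_ext
      intro j
      rw [ContinuousLinearMap.comp_apply, ContinuousLinearMap.one_apply]
      rw [hS₀coord (Ψ f) (N+1) (hΨsupp f (N+1) hf') j]
      have he : ∀ k ∈ Finset.range (N+1), d k * (Ψ f) (j + k)
          = d k * ∑ i ∈ Finset.range (N+1), ccoef lam cφ n i * f ((j + k) + i) := by
        intro k _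
        rw [hΨcoord f (N+1) hf' (j + k)]
      rw [Finset.sum_congr rfl he]
      have hdsc := double_sum_conv d (ccoef lam cφ n)
        (f : ∀ _ : ℕ, ℂ) (N+1) j hf'
      rw [hdsc, hconv2]
      rw [sum_delta_mul (fun p => (f : ∀ _ : ℕ, ℂ) (j + p)) (by omega : 0 < N+1)]
      rfl
    refine ⟨S₀ ∘L Dc, ?_, ?_, ?_⟩
    · apply ContinuousLinearMap.ext
      intro f
      have e0 : (T ^ n) ((S₀ ∘L Dc) f) = (Dl ∘L Dc) ((T ^ n) ((S₀ ∘L Dc) f)) := by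
        rw [hDD, ContinuousLinearMap.one_apply]
      have e1 : (Dl ∘L Dc) ((T ^ n) ((S₀ ∘L Dc) f)) = Dl (Ψ (S₀ (Dc f))) := rfl
      have e2 : Ψ (S₀ (Dc f)) = Dc f := by
        have h := ContinuousLinearMap.ext_iff.mp hΨS (Dc f)
        rw [ContinuousLinearMap.comp_apply, ContinuousLinearMap.one_apply] at h
        exact h
      have e3 : Dl (Dc f) = f := by
        have h := ContinuousLinearMap.ext_iff.mp hDD f
        rw [ContinuousLinearMap.comp_apply, ContinuousLinearMap.one_apply] at h
        exact h
      calc ((T ^ n) ∘L (S₀ ∘L Dc)) f = (T ^ n) ((S₀ ∘L Dc) f) := rfl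
        _ = Dl (Ψ (S₀ (Dc f))) := by rw [e0, e1]
        _ = Dl (Dc f) := by rw [e2]
        _ = f := e3
        _ = (1 : H2 →L[ℂ] H2) f := rfl
    · apply ContinuousLinearMap.ext
      intro f
      have e1 : ((S₀ ∘L Dc) ∘L (T ^ n)) f = S₀ (Ψ f) := rfl
      have e2 : S₀ (Ψ f) = f := by
        have h := ContinuousLinearMap.ext_iff.mp hSΨ f
        rw [ContinuousLinearMap.comp_apply, ContinuousLinearMap.one_apply] at h
        exact h
      rw [e1, e2]
      rfl
    · calc ‖S₀ ∘L Dc‖ ≤ ‖S₀‖ * ‖Dc‖ := ContinuousLinearMap.opNorm_comp_le _ _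
        _ ≤ (1/c) * 1 := by
            have h1 := norm_nonneg S₀
            have h2 := norm_nonneg Dc
            have h3 : (0:ℝ) ≤ 1/c := by positivity
            nlinarith
        _ = 1/c := by ring
  refine ⟨part1, ?_⟩
  rintro ⟨x, hx⟩
  have hxne : x ≠ 0 := by
    rintro rfl
    rw [Metric.dense_iff] at hx
    obtain ⟨y, hy1, k, hk⟩ := hx ((lp.single 2 0 1 : H2)) (1/2) (by norm_num)
    have hy0 : y = 0 := by
      rw [← hk]
      show (T ^ k) 0 = 0
      exact map_zero _
    rw [hy0, mem_ball, dist_comm, dist_eq_norm, sub_zero] at hy1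
    have hns : ‖(lp.single 2 0 1 : H2)‖ = 1 := by
      have h := lp.norm_single (p := 2) (E := fun _ : ℕ => ℂ) (by norm_num)
        0 (1:ℂ)
      simpa using h
    rw [hns] at hy1
    norm_num at hy1
  have hpos : ∀ k : ℕ, (T ^ k) x ≠ 0 := by
    intro k hk0
    obtain ⟨S', hTS', hST', _⟩ := part1 (n₀ + k) (by omega)
    have hzero : (T ^ (n₀ + k)) x = 0 := by
      rw [pow_add, ContinuousLinearMap.mul_apply, hk0, map_zero]
    have hx0 : x = 0 := by
      have h := ContinuousLinearMap.ext_iff.mp hST' x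
      rw [ContinuousLinearMap.comp_apply, hzero, map_zero,
        ContinuousLinearMap.one_apply] at h
      exact h.symm
    exact hxne hx0
  have hlow2 : ∀ k : ℕ, n₀ ≤ k → c * ‖x‖ ≤ ‖(T ^ k) x‖ := by
    intro k hk
    obtain ⟨S', hTS', hST', hS'norm⟩ := part1 k hk
    have hxeq : x = S' ((T ^ k) x) := by
      have h := ContinuousLinearMap.ext_iff.mp hST' x
      rw [ContinuousLinearMap.comp_apply, ContinuousLinearMap.one_apply] at h
      exact h.symm
    have hle : ‖x‖ ≤ (1/c) * ‖(T ^ k) x‖ := by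
      calc ‖x‖ = ‖S' ((T ^ k) x)‖ := by rw [← hxeq]
        _ ≤ ‖S'‖ * ‖(T ^ k) x‖ := ContinuousLinearMap.le_opNorm _ _
        _ ≤ (1/c) * ‖(T ^ k) x‖ := by
            have := norm_nonneg ((T ^ k) x)
            nlinarith
    calc c * ‖x‖ ≤ c * ((1/c) * ‖(T ^ k) x‖) := mul_le_mul_of_nonneg_left hle hc.le
      _ = ‖(T ^ k) x‖ := by field_simp
  set F : Finset ℝ :=
    insert (c * ‖x‖) ((Finset.range n₀).image fun k => ‖(T ^ k) x‖) with hF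
  have hFne : F.Nonempty := ⟨_, Finset.mem_insert_self _ _⟩
  set ε : ℝ := F.min' hFne with hεdef
  have hεpos : 0 < ε := by
    rw [hεdef, Finset.lt_min'_iff]
    intro y hy
    rw [hF, Finset.mem_insert] at hy
    rcases hy with rfl | hy
    · exact mul_pos hc (norm_pos_iff.mpr hxne)
    · obtain ⟨k, _, rfl⟩ := Finset.mem_image.mp hy
      exact norm_pos_iff.mpr (hpos k)
  have hbound : ∀ k : ℕ, ε ≤ ‖(T ^ k) x‖ := by
    intro k
    rcases lt_or_ge k n₀ with hk | hk
    · exact Finset.min'_le F _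
        (Finset.mem_insert_of_mem (Finset.mem_image_of_mem _ (Finset.mem_range.mpr hk)))
    · exact le_trans (Finset.min'_le F _ (Finset.mem_insert_self _ _)) (hlow2 k hk)
  rw [Metric.dense_iff] at hx
  obtain ⟨y, hy1, k, hk⟩ := hx 0 ε hεpos
  rw [← hk, mem_ball, dist_zero_right] at hy1
  exact absurd hy1 (not_lt.mpr (hbound k))
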